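/- The numerator of the weighted 2WFE estimator can be decomposed into 2x2 difference-in-differences comparisons: Σ_i Σ_t w_i λ_t Y_{it}(D_{it} − D̄_i − D̃_t + D̄) = (Σ_i w_i / Σ_t λ_t) · Σ_{s<∞} Σ_{s'≠s} Σ_{t≥s, λ_t=1} Σ_{t'<s, λ_{t'}=1} p̂_s^w p̂_{s'}^w τ̂_{s'}^s(t,t'), where τ̂_{s'}^s(t,t') = [Σ_i w_i 1(t_i*=s)(Y_{it} − Y_{it'})]/[Σ_i w_i 1(t_i*=s)] − [Σ_i w_i 1(t_i*=s')(Y_{it} − Y_{it'})]/[Σ_i w_i 1(t_i*=s')]. -/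

import Mathlib

open Finset

noncomputable section

/-- Treatment indicator `D_{it} = 1(t ≥ t_i*)`. -/
def Dit {n : ℕ} (tstar : Fin n → ℕ∞) (i : Fin n) (t : ℕ) : ℝ :=
  if tstar i ≤ (t : ℕ∞) then 1 else 0

/-- Unit-level λ-weighted mean of treatment: `D̄_i`. -/
def DbarI {n : ℕ} (T : ℕ) (lam : ℕ → ℝ) (tstar : Fin n → ℕ∞) (i : Fin n) : ℝ :=
  (∑ t ∈ Finset.Icc 1 T, lam t * Dit tstar i t) / (∑ t ∈ Finset.Icc 1 T, lam t)

/-- Period-level w-weighted mean of treatment: `D̃_t`. -/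
def DtildeT {n : ℕ} (w : Fin n → ℝ) (tstar : Fin n → ℕ∞) (t : ℕ) : ℝ :=
  (∑ i, w i * Dit tstar i t) / (∑ i, w i)

/-- Overall weighted mean of treatment: `D̄`. -/
def Dbar {n : ℕ} (T : ℕ) (w : Fin n → ℝ) (lam : ℕ → ℝ) (tstar : Fin n → ℕ∞) : ℝ :=
  (∑ i, ∑ t ∈ Finset.Icc 1 T, w i * lam t * Dit tstar i t) /
    ((∑ i, w i) * (∑ t ∈ Finset.Icc 1 T, lam t))

/-- Demeaned treatment `D̈_{it} = D_{it} − D̄_i − D̃_t + D̄`. -/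
def Ddot {n : ℕ} (T : ℕ) (w : Fin n → ℝ) (lam : ℕ → ℝ) (tstar : Fin n → ℕ∞)
    (i : Fin n) (t : ℕ) : ℝ :=
  Dit tstar i t - DbarI T lam tstar i - DtildeT w tstar t + Dbar T w lam tstar

/-- Weighted cohort share `p̂_c^w` (cohort `c ∈ ℕ∞`, with `⊤` the never treated). -/
def phat {n : ℕ} (w : Fin n → ℝ) (tstar : Fin n → ℕ∞) (c : ℕ∞) : ℝ :=
  (∑ i, w i * (if tstar i = c then 1 else 0)) / (∑ i, w i)

/-- Share of included periods `t ≥ u`: `Λ_u`. -/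
def Lam (T : ℕ) (lam : ℕ → ℝ) (u : ℕ) : ℝ :=
  (∑ t ∈ Finset.Icc 1 T, lam t * (if u ≤ t then 1 else 0)) / (∑ t ∈ Finset.Icc 1 T, lam t)

/-- Weighted two-way fixed effects estimator `τ̂(w, λ)`. -/
def tauhat {n : ℕ} (T : ℕ) (w : Fin n → ℝ) (lam : ℕ → ℝ) (tstar : Fin n → ℕ∞)
    (Y : Fin n → ℕ → ℝ) : ℝ :=
  (∑ i, ∑ t ∈ Finset.Icc 1 T, w i * lam t * Y i t * Ddot T w lam tstar i t) /
    (∑ i, ∑ t ∈ Finset.Icc 1 T, w i * lam t * Dit tstar i t * Ddot T w lam tstar i t)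

end

/-- The 2x2 DiD comparison `τ̂_{c'}^{c}(t, t')` between cohorts `c` and `c'`. -/
noncomputable def tau2x2 {n : ℕ} (w : Fin n → ℝ) (tstar : Fin n → ℕ∞)
    (Y : Fin n → ℕ → ℝ) (c c' : ℕ∞) (t t' : ℕ) : ℝ :=
  (∑ i, w i * (if tstar i = c then 1 else 0) * (Y i t - Y i t')) /
      (∑ i, w i * (if tstar i = c then 1 else 0))
    - (∑ i, w i * (if tstar i = c' then 1 else 0) * (Y i t - Y i t')) /
        (∑ i, w i * (if tstar i = c' then 1 else 0))

namespace Stmt3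

noncomputable section

variable {n : ℕ}

def dfun (c : ℕ∞) (t : ℕ) : ℝ := if c ≤ (t : ℕ∞) then 1 else 0

def Sc (w : Fin n → ℝ) (tstar : Fin n → ℕ∞) (c : ℕ∞) : ℝ :=
  ∑ i, w i * (if tstar i = c then 1 else 0)

def Gc (w : Fin n → ℝ) (tstar : Fin n → ℕ∞) (Y : Fin n → ℕ → ℝ) (c : ℕ∞) (t : ℕ) : ℝ :=
  ∑ i, w i * (if tstar i = c then 1 else 0) * Y i t

def Ltil (T : ℕ) (lam : ℕ → ℝ) (c : ℕ∞) : ℝ := ∑ t ∈ Finset.Icc 1 T, lam t * dfun c t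

lemma collapse (C : Finset ℕ∞) (tstar : Fin n → ℕ∞) (hC : ∀ i, tstar i ∈ C)
    (g : Fin n → ℕ∞ → ℝ) :
    ∑ c ∈ C, ∑ i, (if tstar i = c then g i c else 0) = ∑ i, g i (tstar i) := by
  rw [Finset.sum_comm]
  refine Finset.sum_congr rfl fun i _ => ?_
  rw [Finset.sum_ite_eq C (tstar i) (g i), if_pos (hC i)]

lemma Gc_eq_zero (w : Fin n → ℝ) (tstar : Fin n → ℕ∞) (Y : Fin n → ℕ → ℝ) (c : ℕ∞)
    (hw : ∀ i, 0 ≤ w i) (h : Sc w tstar c = 0) (t : ℕ) : Gc w tstar Y c t = 0 := by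
  have h0 := (Finset.sum_eq_zero_iff_of_nonneg (fun i (_ : i ∈ Finset.univ) =>
      mul_nonneg (hw i) (by positivity))).mp h
  refine Finset.sum_eq_zero fun i hi => ?_
  rw [h0 i hi, zero_mul]

lemma pair_sum {ι κ : Type*} (s : Finset ι) (r : Finset κ) (u b : ι → ℝ) (a c : κ → ℝ) :
    ∑ x ∈ s, ∑ y ∈ r, (u x * a y - b x * c y)
      = (∑ x ∈ s, u x) * (∑ y ∈ r, a y) - (∑ x ∈ s, b x) * (∑ y ∈ r, c y) := by
  simp only [Finset.sum_sub_distrib, ← Finset.mul_sum, ← Finset.sum_mul]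

lemma num_eq (w : Fin n → ℝ) (tstar : Fin n → ℕ∞) (Y : Fin n → ℕ → ℝ) (c : ℕ∞) (t t' : ℕ) :
    ∑ i, w i * (if tstar i = c then 1 else 0) * (Y i t - Y i t')
      = Gc w tstar Y c t - Gc w tstar Y c t' := by
  unfold Gc
  rw [← Finset.sum_sub_distrib]
  exact Finset.sum_congr rfl fun i _ => by ring

lemma tau_red (w : Fin n → ℝ) (tstar : Fin n → ℕ∞) (Y : Fin n → ℕ → ℝ)
    (hw : ∀ i, 0 ≤ w i) (c c' : ℕ∞) (t t' : ℕ) :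
    phat w tstar c * phat w tstar c' * tau2x2 w tstar Y c c' t t'
      = (Sc w tstar c' * (Gc w tstar Y c t - Gc w tstar Y c t')
          - Sc w tstar c * (Gc w tstar Y c' t - Gc w tstar Y c' t'))
        / ((∑ i, w i) * (∑ i, w i)) := by
  unfold phat tau2x2
  rw [num_eq, num_eq]
  show (Sc w tstar c / _) * (Sc w tstar c' / _) *
      ((Gc w tstar Y c t - Gc w tstar Y c t') / Sc w tstar c
        - (Gc w tstar Y c' t - Gc w tstar Y c' t') / Sc w tstar c') = _
  by_cases hc : Sc w tstar c = 0
  · rw [hc, Gc_eq_zero w tstar Y c hw hc, Gc_eq_zero w tstar Y c hw hc]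
    simp
  by_cases hc' : Sc w tstar c' = 0
  · rw [hc', Gc_eq_zero w tstar Y c' hw hc', Gc_eq_zero w tstar Y c' hw hc']
    simp
  by_cases hW : (∑ i, w i) = 0
  · rw [hW]; simp
  field_simp

lemma dfun_nat (s t : ℕ) : dfun (s : ℕ∞) t = if s ≤ t then 1 else 0 := by
  unfold dfun
  simp [Nat.cast_le]

lemma dfun_top (t : ℕ) : dfun ⊤ t = 0 := by
  unfold dfun
  simp

lemma Ltil_top (T : ℕ) (lam : ℕ → ℝ) : Ltil T lam ⊤ = 0 := by
  unfold Ltil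
  simp [dfun_top]

lemma icc_split (T s : ℕ) (h2 : 2 ≤ s) (hT : s ≤ T) (f : ℕ → ℝ) :
    ∑ t ∈ Finset.Icc 1 T, f t
      = (∑ t ∈ Finset.Icc 1 (s - 1), f t) + ∑ t ∈ Finset.Icc s T, f t := by
  have h1 : 1 ≤ s := le_trans one_le_two h2
  have hss : s - 1 + 1 = s := by omega
  rw [← Finset.Ico_add_one_right_eq_Icc 1 T, ← Finset.Ico_add_one_right_eq_Icc 1 (s-1), ← Finset.Ico_add_one_right_eq_Icc s T, hss]
  exact (Finset.sum_Ico_consecutive f h1 (Nat.le_succ_of_le hT)).symm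

lemma Ltil_nat (T s : ℕ) (lam : ℕ → ℝ) (h2 : 2 ≤ s) (hT : s ≤ T) :
    Ltil T lam (s : ℕ∞) = ∑ t ∈ Finset.Icc s T, lam t := by
  unfold Ltil
  rw [icc_split T s h2 hT]
  have hB : ∀ t ∈ Finset.Icc 1 (s-1), lam t * dfun (s:ℕ∞) t = 0 := fun t ht => by
    rw [dfun_nat, if_neg, mul_zero]
    have := (Finset.mem_Icc.mp ht).2
    omega
  have hA : ∀ t ∈ Finset.Icc s T, lam t * dfun (s:ℕ∞) t = lam t := fun t ht => by
    rw [dfun_nat, if_pos (Finset.mem_Icc.mp ht).1, mul_one]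
  rw [Finset.sum_eq_zero hB, Finset.sum_congr rfl hA, zero_add]

lemma time_split (T : ℕ) (lam : ℕ → ℝ) (s : ℕ) (h2 : 2 ≤ s) (hT : s ≤ T) (F : ℕ → ℝ) :
    ∑ t ∈ Finset.Icc s T, ∑ t' ∈ Finset.Icc 1 (s - 1), lam t * lam t' * (F t - F t')
      = ∑ t ∈ Finset.Icc 1 T,
          lam t * ((∑ r ∈ Finset.Icc 1 T, lam r) * dfun (s : ℕ∞) t - Ltil T lam (s : ℕ∞))
            * F t := by
  have hsplit := icc_split T s h2 hT
  have hLt := Ltil_nat T s lam h2 hT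
  have key : ∀ t t', lam t * lam t' * (F t - F t')
      = (lam t * F t) * lam t' - lam t * (lam t' * F t') := fun t t' => by ring
  simp only [key]
  simp only [Finset.sum_sub_distrib, ← Finset.mul_sum, ← Finset.sum_mul]
  rw [hsplit (fun t => lam t * ((∑ r ∈ Finset.Icc 1 T, lam r) * dfun (s:ℕ∞) t - Ltil T lam (s:ℕ∞)) * F t)]
  have hB : ∑ t ∈ Finset.Icc 1 (s-1),
      lam t * ((∑ r ∈ Finset.Icc 1 T, lam r) * dfun (s:ℕ∞) t - Ltil T lam (s:ℕ∞)) * F t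
      = ∑ t ∈ Finset.Icc 1 (s-1), (- Ltil T lam (s:ℕ∞)) * (lam t * F t) := by
    refine Finset.sum_congr rfl fun t ht => ?_
    rw [dfun_nat, if_neg (by have := (Finset.mem_Icc.mp ht).2; omega)]
    ring
  have hA : ∑ t ∈ Finset.Icc s T,
      lam t * ((∑ r ∈ Finset.Icc 1 T, lam r) * dfun (s:ℕ∞) t - Ltil T lam (s:ℕ∞)) * F t
      = ∑ t ∈ Finset.Icc s T,
          ((∑ r ∈ Finset.Icc 1 T, lam r) - Ltil T lam (s:ℕ∞)) * (lam t * F t) := by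
    refine Finset.sum_congr rfl fun t ht => ?_
    rw [dfun_nat, if_pos (Finset.mem_Icc.mp ht).1]
    ring
  rw [hB, hA, ← Finset.mul_sum, ← Finset.mul_sum, hLt, hsplit lam]
  ring

lemma Dit_eq (tstar : Fin n → ℕ∞) (i : Fin n) (t : ℕ) :
    Dit tstar i t = dfun (tstar i) t := rfl

lemma DbarI_eq (T : ℕ) (lam : ℕ → ℝ) (tstar : Fin n → ℕ∞) (i : Fin n) :
    DbarI T lam tstar i = Ltil T lam (tstar i) / (∑ t ∈ Finset.Icc 1 T, lam t) := rfl

lemma Dbar_eq (T : ℕ) (w : Fin n → ℝ) (lam : ℕ → ℝ) (tstar : Fin n → ℕ∞) :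
    Dbar T w lam tstar = (∑ j, w j * Ltil T lam (tstar j)) /
      ((∑ i, w i) * (∑ t ∈ Finset.Icc 1 T, lam t)) := by
  unfold Dbar Ltil
  congr 1
  refine Finset.sum_congr rfl fun j _ => ?_
  rw [Finset.mul_sum]
  exact Finset.sum_congr rfl fun t _ => by rw [Dit_eq]; ring

lemma lhs_t (T : ℕ) (w : Fin n → ℝ) (lam : ℕ → ℝ) (tstar : Fin n → ℕ∞)
    (Y : Fin n → ℕ → ℝ) (hW : (∑ i, w i) ≠ 0)
    (hL : (∑ t ∈ Finset.Icc 1 T, lam t) ≠ 0) (t : ℕ) :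
    ∑ i, w i * lam t * Y i t * Ddot T w lam tstar i t
      = (∑ i, ∑ j, w i * w j *
            ((∑ r ∈ Finset.Icc 1 T, lam r) * dfun (tstar i) t - Ltil T lam (tstar i))
            * (Y i t - Y j t)) * lam t
          / ((∑ i, w i) * (∑ r ∈ Finset.Icc 1 T, lam r)) := by
  set L := ∑ r ∈ Finset.Icc 1 T, lam r with hLdef
  set W := ∑ i, w i with hWdef
  set DT := ∑ j, w j * dfun (tstar j) t with hDT
  set DD := ∑ j, w j * Ltil T lam (tstar j) with hDD
  set P := ∑ i, w i * dfun (tstar i) t * Y i t with hP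
  set Q := ∑ i, w i * Ltil T lam (tstar i) * Y i t with hQ
  set R := ∑ i, w i * Y i t with hR
  have hdtilde : DtildeT w tstar t = DT / W := by
    unfold DtildeT
    rw [← hWdef, hDT]
    rfl
  have hdouble : (∑ i, ∑ j, w i * w j * (L * dfun (tstar i) t - Ltil T lam (tstar i))
      * (Y i t - Y j t)) = (L * P - Q) * W - (L * DT - DD) * R := by
    have e1 : ∀ i : Fin n, ∑ j, w i * w j * (L * dfun (tstar i) t - Ltil T lam (tstar i))
        * (Y i t - Y j t)
        = (w i * (L * dfun (tstar i) t - Ltil T lam (tstar i)) * Y i t) * W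
          - (w i * (L * dfun (tstar i) t - Ltil T lam (tstar i))) * R := fun i => by
      rw [hWdef, hR, Finset.mul_sum, Finset.mul_sum, ← Finset.sum_sub_distrib]
      exact Finset.sum_congr rfl fun j _ => by ring
    rw [Finset.sum_congr rfl fun i _ => e1 i, Finset.sum_sub_distrib,
      ← Finset.sum_mul, ← Finset.sum_mul]
    have e2 : (∑ i, w i * (L * dfun (tstar i) t - Ltil T lam (tstar i)) * Y i t)
        = L * P - Q := by
      rw [hP, hQ, Finset.mul_sum, ← Finset.sum_sub_distrib]
      exact Finset.sum_congr rfl fun i _ => by ring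
    have e3 : (∑ i, w i * (L * dfun (tstar i) t - Ltil T lam (tstar i)))
        = L * DT - DD := by
      rw [hDT, hDD, Finset.mul_sum, ← Finset.sum_sub_distrib]
      exact Finset.sum_congr rfl fun i _ => by ring
    rw [e2, e3]
  rw [hdouble]
  have e4 : ∑ i, w i * lam t * Y i t * Ddot T w lam tstar i t
      = lam t * P - (lam t / L) * Q - (lam t * (DT / W)) * R
        + (lam t * (DD / (W * L))) * R := by
    rw [hP, hQ, hR, Finset.mul_sum, Finset.mul_sum, Finset.mul_sum, Finset.mul_sum,
      ← Finset.sum_sub_distrib, ← Finset.sum_sub_distrib, ← Finset.sum_add_distrib]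
    refine Finset.sum_congr rfl fun i _ => ?_
    unfold Ddot
    rw [Dit_eq, DbarI_eq, hdtilde, Dbar_eq, ← hWdef, ← hLdef, ← hDD]
    ring
  rw [e4]
  field_simp
  ring

lemma inner_eq (T : ℕ) (w : Fin n → ℝ) (lam : ℕ → ℝ) (tstar : Fin n → ℕ∞)
    (Y : Fin n → ℕ → ℝ) (hw : ∀ i, 0 ≤ w i) (s : ℕ) (h2 : 2 ≤ s) (hT : s ≤ T) (c' : ℕ∞) :
    ∑ t ∈ Finset.Icc s T, ∑ t' ∈ Finset.Icc 1 (s - 1),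
        lam t * lam t' * phat w tstar (s : ℕ∞) * phat w tstar c'
          * tau2x2 w tstar Y (s : ℕ∞) c' t t'
      = (∑ t ∈ Finset.Icc 1 T,
          lam t * ((∑ r ∈ Finset.Icc 1 T, lam r) * dfun (s:ℕ∞) t - Ltil T lam (s:ℕ∞))
            * (Sc w tstar c' * Gc w tstar Y (s:ℕ∞) t - Sc w tstar (s:ℕ∞) * Gc w tstar Y c' t))
        / ((∑ i, w i) * (∑ i, w i)) := by
  have e1 : ∀ t t', lam t * lam t' * phat w tstar (s:ℕ∞) * phat w tstar c'
      * tau2x2 w tstar Y (s:ℕ∞) c' t t'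
      = (lam t * lam t' *
          ((Sc w tstar c' * Gc w tstar Y (s:ℕ∞) t - Sc w tstar (s:ℕ∞) * Gc w tstar Y c' t)
            - (Sc w tstar c' * Gc w tstar Y (s:ℕ∞) t' - Sc w tstar (s:ℕ∞) * Gc w tstar Y c' t')))
          * ((∑ i, w i) * (∑ i, w i))⁻¹ := by
    intro t t'
    rw [show lam t * lam t' * phat w tstar (s:ℕ∞) * phat w tstar c'
          * tau2x2 w tstar Y (s:ℕ∞) c' t t'
        = lam t * lam t' * (phat w tstar (s:ℕ∞) * phat w tstar c'
          * tau2x2 w tstar Y (s:ℕ∞) c' t t') from by ring,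
      tau_red w tstar Y hw (s:ℕ∞) c' t t']
    rw [div_eq_mul_inv]
    ring
  simp only [e1]
  simp only [← Finset.sum_mul]
  rw [time_split T lam s h2 hT
    (fun r => Sc w tstar c' * Gc w tstar Y (s:ℕ∞) r - Sc w tstar (s:ℕ∞) * Gc w tstar Y c' r),
    div_eq_mul_inv]

lemma cohort_unit (T : ℕ) (w : Fin n → ℝ) (lam : ℕ → ℝ) (tstar : Fin n → ℕ∞)
    (Y : Fin n → ℕ → ℝ) (C : Finset ℕ∞) (hC : ∀ i, tstar i ∈ C) (t : ℕ) :
    ∑ c ∈ C, ∑ c' ∈ C,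
        ((∑ r ∈ Finset.Icc 1 T, lam r) * dfun c t - Ltil T lam c)
          * (Sc w tstar c' * Gc w tstar Y c t - Sc w tstar c * Gc w tstar Y c' t)
      = ∑ i, ∑ j, w i * w j *
          ((∑ r ∈ Finset.Icc 1 T, lam r) * dfun (tstar i) t - Ltil T lam (tstar i))
          * (Y i t - Y j t) := by
  set L := ∑ r ∈ Finset.Icc 1 T, lam r with hLdef
  set X := fun c => L * dfun c t - Ltil T lam c with hX
  have lhs_eq : ∑ c ∈ C, ∑ c' ∈ C, X c *
        (Sc w tstar c' * Gc w tstar Y c t - Sc w tstar c * Gc w tstar Y c' t)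
      = (∑ c ∈ C, X c * Gc w tstar Y c t) * (∑ c' ∈ C, Sc w tstar c')
        - (∑ c ∈ C, X c * Sc w tstar c) * (∑ c' ∈ C, Gc w tstar Y c' t) := by
    rw [← pair_sum C C (fun c => X c * Gc w tstar Y c t) (fun c => X c * Sc w tstar c)
      (fun c' => Sc w tstar c') (fun c' => Gc w tstar Y c' t)]
    exact Finset.sum_congr rfl fun c _ => Finset.sum_congr rfl fun c' _ => by ring
  have rhs_eq : ∑ i, ∑ j, w i * w j * X (tstar i) * (Y i t - Y j t)
      = (∑ i, X (tstar i) * (w i * Y i t)) * (∑ j, w j)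
        - (∑ i, X (tstar i) * w i) * (∑ j, w j * Y j t) := by
    rw [← pair_sum Finset.univ Finset.univ (fun i => X (tstar i) * (w i * Y i t))
      (fun i => X (tstar i) * w i) w (fun j => w j * Y j t)]
    exact Finset.sum_congr rfl fun i _ => Finset.sum_congr rfl fun j _ => by ring
  have h1 : ∑ c ∈ C, X c * Gc w tstar Y c t = ∑ i, X (tstar i) * (w i * Y i t) := by
    rw [← collapse C tstar hC (fun i c => X c * (w i * Y i t))]
    refine Finset.sum_congr rfl fun c _ => ?_
    unfold Gc
    rw [Finset.mul_sum]
    refine Finset.sum_congr rfl fun i _ => ?_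
    by_cases h : tstar i = c <;> simp [h]
  have h2 : ∑ c' ∈ C, Sc w tstar c' = ∑ j, w j := by
    rw [← collapse C tstar hC (fun i _ => w i)]
    refine Finset.sum_congr rfl fun c _ => ?_
    unfold Sc
    refine Finset.sum_congr rfl fun i _ => ?_
    by_cases h : tstar i = c <;> simp [h]
  have h3 : ∑ c ∈ C, X c * Sc w tstar c = ∑ i, X (tstar i) * w i := by
    rw [← collapse C tstar hC (fun i c => X c * w i)]
    refine Finset.sum_congr rfl fun c _ => ?_
    unfold Sc
    rw [Finset.mul_sum]
    refine Finset.sum_congr rfl fun i _ => ?_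
    by_cases h : tstar i = c <;> simp [h]
  have h4 : ∑ c' ∈ C, Gc w tstar Y c' t = ∑ j, w j * Y j t := by
    rw [← collapse C tstar hC (fun i c => w i * Y i t)]
    refine Finset.sum_congr rfl fun c _ => ?_
    unfold Gc
    refine Finset.sum_congr rfl fun i _ => ?_
    by_cases h : tstar i = c <;> simp [h]
  calc ∑ c ∈ C, ∑ c' ∈ C, X c *
        (Sc w tstar c' * Gc w tstar Y c t - Sc w tstar c * Gc w tstar Y c' t)
      = (∑ i, X (tstar i) * (w i * Y i t)) * (∑ j, w j)
        - (∑ i, X (tstar i) * w i) * (∑ j, w j * Y j t) := by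
        rw [lhs_eq, h1, h2, h3, h4]
    _ = ∑ i, ∑ j, w i * w j * X (tstar i) * (Y i t - Y j t) := rhs_eq.symm

end

end Stmt3

open Stmt3

/-- The numerator of the weighted 2WFE estimator decomposes into
2x2 DiD comparisons `τ̂_{s'}^s(t,t')` of each finite cohort `s` against every other
cohort `s' ≠ s` (including the never treated `⊤`), over post-periods `t ≥ s` and
pre-periods `t' < s` with `λ_t = λ_{t'} = 1`. -/
theorem statement3 {n T : ℕ} (w : Fin n → ℝ) (lam : ℕ → ℝ) (tstar : Fin n → ℕ∞)
    (Y : Fin n → ℕ → ℝ)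
    (hw : ∀ i, 0 ≤ w i) (hwpos : 0 < ∑ i, w i)
    (hlam : ∀ t, lam t = 0 ∨ lam t = 1) (hlam2 : 2 ≤ ∑ t ∈ Finset.Icc 1 T, lam t)
    (htstar : ∀ i, tstar i = ⊤ ∨ ∃ s ∈ Finset.Icc 2 T, tstar i = (s : ℕ∞))
    (hpos : ∀ c : ℕ∞, (∃ i, tstar i = c) →
      0 < ∑ i, w i * (if tstar i = c then 1 else 0)) :
    ∑ i, ∑ t ∈ Finset.Icc 1 T, w i * lam t * Y i t * Ddot T w lam tstar i t
      = ((∑ i, w i) / (∑ t ∈ Finset.Icc 1 T, lam t)) *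
          ∑ s ∈ Finset.Icc 2 T,
            ∑ c' ∈ (((Finset.Icc 2 T).image (fun u : ℕ => (u : ℕ∞)) ∪ {(⊤ : ℕ∞)}).erase (s : ℕ∞)),
              ∑ t ∈ Finset.Icc s T, ∑ t' ∈ Finset.Icc 1 (s - 1),
                lam t * lam t' * phat w tstar (s : ℕ∞) * phat w tstar c' *
                  tau2x2 w tstar Y (s : ℕ∞) c' t t' := by
  have hW : (∑ i, w i) ≠ 0 := ne_of_gt hwpos
  have hLpos : (0:ℝ) < ∑ t ∈ Finset.Icc 1 T, lam t := lt_of_lt_of_le two_pos hlam2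
  have hL : (∑ t ∈ Finset.Icc 1 T, lam t) ≠ 0 := ne_of_gt hLpos
  set C : Finset ℕ∞ := (Finset.Icc 2 T).image (fun u : ℕ => (u : ℕ∞)) ∪ {(⊤ : ℕ∞)}
    with hCdef
  have hC : ∀ i, tstar i ∈ C := by
    intro i
    rcases htstar i with h | ⟨s, hs, h⟩
    · rw [h, hCdef]
      exact Finset.mem_union_right _ (Finset.mem_singleton_self _)
    · rw [h, hCdef]
      exact Finset.mem_union_left _ (Finset.mem_image_of_mem _ hs)
  -- the common middle expression
  set E : ℝ := ∑ t ∈ Finset.Icc 1 T,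
      (∑ i, ∑ j, w i * w j *
          ((∑ r ∈ Finset.Icc 1 T, lam r) * dfun (tstar i) t - Ltil T lam (tstar i))
          * (Y i t - Y j t)) * lam t
        / ((∑ i, w i) * (∑ r ∈ Finset.Icc 1 T, lam r)) with hEdef
  have hLHS : ∑ i, ∑ t ∈ Finset.Icc 1 T, w i * lam t * Y i t * Ddot T w lam tstar i t
      = E := by
    rw [Finset.sum_comm, hEdef]
    exact Finset.sum_congr rfl fun t _ => lhs_t T w lam tstar Y hW hL t
  rw [hLHS]
  -- now the RHS
  have step1 : ∀ s ∈ Finset.Icc 2 T,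
      ∑ c' ∈ C.erase (s:ℕ∞), ∑ t ∈ Finset.Icc s T, ∑ t' ∈ Finset.Icc 1 (s - 1),
          lam t * lam t' * phat w tstar (s : ℕ∞) * phat w tstar c' *
            tau2x2 w tstar Y (s : ℕ∞) c' t t'
      = (∑ c' ∈ C, ∑ t ∈ Finset.Icc 1 T,
          lam t * ((∑ r ∈ Finset.Icc 1 T, lam r) * dfun (s:ℕ∞) t - Ltil T lam (s:ℕ∞))
            * (Sc w tstar c' * Gc w tstar Y (s:ℕ∞) t - Sc w tstar (s:ℕ∞) * Gc w tstar Y c' t))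
        / ((∑ i, w i) * (∑ i, w i)) := by
    intro s hs
    obtain ⟨h2, hT⟩ := Finset.mem_Icc.mp hs
    rw [Finset.sum_congr rfl fun c' _ => inner_eq T w lam tstar Y hw s h2 hT c',
      ← Finset.sum_div]
    congr 1
    refine Finset.sum_erase C ?_
    refine Finset.sum_eq_zero fun t _ => ?_
    rw [sub_self, mul_zero]
  rw [Finset.sum_congr rfl step1, ← Finset.sum_div]
  -- extend the outer sum over s to the full cohort set C
  have hinj : Set.InjOn (fun u : ℕ => (u : ℕ∞)) (Finset.Icc 2 T) :=
    fun a _ b _ h => Nat.cast_injective h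
  have htopnot : (⊤ : ℕ∞) ∉ (Finset.Icc 2 T).image (fun u : ℕ => (u : ℕ∞)) := by
    simp only [Finset.mem_image, not_exists]
    intro x h
    exact WithTop.natCast_ne_top x h.2
  have hdisj : Disjoint ((Finset.Icc 2 T).image (fun u : ℕ => (u : ℕ∞))) {(⊤ : ℕ∞)} :=
    Finset.disjoint_singleton_right.mpr htopnot
  have hext : (∑ s ∈ Finset.Icc 2 T, ∑ c' ∈ C, ∑ t ∈ Finset.Icc 1 T,
        lam t * ((∑ r ∈ Finset.Icc 1 T, lam r) * dfun (s:ℕ∞) t - Ltil T lam (s:ℕ∞))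
          * (Sc w tstar c' * Gc w tstar Y (s:ℕ∞) t - Sc w tstar (s:ℕ∞) * Gc w tstar Y c' t))
      = ∑ c ∈ C, ∑ c' ∈ C, ∑ t ∈ Finset.Icc 1 T,
          lam t * ((∑ r ∈ Finset.Icc 1 T, lam r) * dfun c t - Ltil T lam c)
            * (Sc w tstar c' * Gc w tstar Y c t - Sc w tstar c * Gc w tstar Y c' t) := by
    rw [hCdef, Finset.sum_union hdisj, Finset.sum_singleton,
      Finset.sum_image (fun x _ y _ h => Nat.cast_injective h)]
    have htop0 : (∑ c' ∈ C, ∑ t ∈ Finset.Icc 1 T,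
        lam t * ((∑ r ∈ Finset.Icc 1 T, lam r) * dfun (⊤:ℕ∞) t - Ltil T lam (⊤:ℕ∞))
          * (Sc w tstar c' * Gc w tstar Y (⊤:ℕ∞) t - Sc w tstar (⊤:ℕ∞) * Gc w tstar Y c' t))
        = 0 := by
      refine Finset.sum_eq_zero fun c' _ => Finset.sum_eq_zero fun t _ => ?_
      rw [dfun_top, Ltil_top]
      ring
    rw [htop0, add_zero]
  rw [hext]
  have hswap : (∑ c ∈ C, ∑ c' ∈ C, ∑ t ∈ Finset.Icc 1 T,
        lam t * ((∑ r ∈ Finset.Icc 1 T, lam r) * dfun c t - Ltil T lam c)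
          * (Sc w tstar c' * Gc w tstar Y c t - Sc w tstar c * Gc w tstar Y c' t))
      = ∑ t ∈ Finset.Icc 1 T, ∑ c ∈ C, ∑ c' ∈ C,
          lam t * ((∑ r ∈ Finset.Icc 1 T, lam r) * dfun c t - Ltil T lam c)
            * (Sc w tstar c' * Gc w tstar Y c t - Sc w tstar c * Gc w tstar Y c' t) := by
    rw [Finset.sum_congr rfl fun c (_ : c ∈ C) => Finset.sum_comm]
    exact Finset.sum_comm
  rw [hswap]
  have hperT : ∀ t ∈ Finset.Icc 1 T, (∑ c ∈ C, ∑ c' ∈ C,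
        lam t * ((∑ r ∈ Finset.Icc 1 T, lam r) * dfun c t - Ltil T lam c)
          * (Sc w tstar c' * Gc w tstar Y c t - Sc w tstar c * Gc w tstar Y c' t))
      = lam t * ∑ i, ∑ j, w i * w j *
          ((∑ r ∈ Finset.Icc 1 T, lam r) * dfun (tstar i) t - Ltil T lam (tstar i))
          * (Y i t - Y j t) := by
    intro t _
    rw [← cohort_unit T w lam tstar Y C hC t, Finset.mul_sum]
    refine Finset.sum_congr rfl fun c _ => ?_
    rw [Finset.mul_sum]
    exact Finset.sum_congr rfl fun c' _ => by ring
  rw [Finset.sum_congr rfl hperT, hEdef]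
  have hcomm : (∑ t ∈ Finset.Icc 1 T,
        (∑ i, ∑ j, w i * w j *
          ((∑ r ∈ Finset.Icc 1 T, lam r) * dfun (tstar i) t - Ltil T lam (tstar i))
          * (Y i t - Y j t)) * lam t
        / ((∑ i, w i) * (∑ r ∈ Finset.Icc 1 T, lam r)))
      = (∑ t ∈ Finset.Icc 1 T, lam t *
          ∑ i, ∑ j, w i * w j *
            ((∑ r ∈ Finset.Icc 1 T, lam r) * dfun (tstar i) t - Ltil T lam (tstar i))
            * (Y i t - Y j t))
        / ((∑ i, w i) * (∑ r ∈ Finset.Icc 1 T, lam r)) := by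
    rw [← Finset.sum_div]
    congr 1
    exact Finset.sum_congr rfl fun t _ => by ring
  rw [hcomm]
  field_simp
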